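/- Under the same setup as the L-layer homotopic architecture (each f^{eq}_i, f^{neq}_i M-Lipschitz, f^{eq}_i(0)=0, ‖f^{neq}_i(x)‖ ≤ B‖x‖, B ≤ M), the refined bound ‖F_γ(x) − F_0(x)‖ ≤ [Σ_{k=0}^{L−1} |γ_{k+1}| (1 + (1/k)Σ_{j=1}^{k}|γ_j|)^k] · B · M^{L−1} · ‖x‖ holds for all x, where the summand at k = 0 is interpreted as |γ_1|. -/

import Mathlib

/-- AM-GM: product of (1 + a j) is at most (1 + average)^k. -/
lemma amgm_prod_le (a : ℕ → ℝ) (ha : ∀ j, 0 ≤ a j) (k : ℕ) :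
    ∏ j ∈ Finset.range k, (1 + a j) ≤
      (1 + (1 / (k : ℝ)) * ∑ j ∈ Finset.range k, a j) ^ k := by
  rcases Nat.eq_zero_or_pos k with hk | hk
  · simp [hk]
  have hk0 : (k : ℝ) ≠ 0 := Nat.cast_ne_zero.mpr hk.ne'
  have hkpos : (0 : ℝ) < k := Nat.cast_pos.mpr hk
  have hz : ∀ j ∈ Finset.range k, (0 : ℝ) ≤ 1 + a j := fun j _ => by linarith [ha j]
  have hgm := Real.geom_mean_le_arith_mean_weighted (Finset.range k)
      (fun _ => 1 / (k : ℝ)) (fun j => 1 + a j)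
      (fun j _ => by positivity)
      (by rw [Finset.sum_const, Finset.card_range, nsmul_eq_mul]; field_simp) hz
  have hrhs : ∑ j ∈ Finset.range k, (1 / (k : ℝ)) * (1 + a j)
      = 1 + (1 / (k : ℝ)) * ∑ j ∈ Finset.range k, a j := by
    rw [← Finset.mul_sum, Finset.sum_add_distrib, Finset.sum_const, Finset.card_range,
      nsmul_eq_mul, mul_one, mul_add]
    field_simp
  rw [hrhs] at hgm
  have hLnn : (0 : ℝ) ≤ ∏ j ∈ Finset.range k, (1 + a j) ^ (1 / (k : ℝ)) :=
    Finset.prod_nonneg fun j hj => Real.rpow_nonneg (hz j hj) _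
  have h2 := pow_le_pow_left₀ hLnn hgm k
  have heq : (∏ j ∈ Finset.range k, (1 + a j) ^ (1 / (k : ℝ))) ^ k
      = ∏ j ∈ Finset.range k, (1 + a j) := by
    rw [← Finset.prod_pow]
    refine Finset.prod_congr rfl fun j hj => ?_
    rw [← Real.rpow_natCast ((1 + a j) ^ (1 / (k : ℝ))) k,
      ← Real.rpow_mul (hz j hj), one_div, inv_mul_cancel₀ hk0, Real.rpow_one]
  rw [heq] at h2
  exact h2

theorem stmt5
    {Z : ℕ → Type*} [∀ i, NormedAddCommGroup (Z i)] [∀ i, NormedSpace ℝ (Z i)]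
    (L : ℕ) (hL : 1 ≤ L)
    (feq fneq : ∀ i, Z i → Z (i + 1)) (γ : ℕ → ℝ) (M B : ℝ)
    (hM : 0 ≤ M) (hB : 0 ≤ B) (hBM : B ≤ M)
    (hfeqLip : ∀ i, ∀ a b : Z i, ‖feq i a - feq i b‖ ≤ M * ‖a - b‖)
    (hfeq0 : ∀ i, feq i 0 = 0)
    (hfneqLip : ∀ i, ∀ a b : Z i, ‖fneq i a - fneq i b‖ ≤ M * ‖a - b‖)
    (hfneqB : ∀ i, ∀ a : Z i, ‖fneq i a‖ ≤ B * ‖a‖)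
    (x : Z 0) (z zeq : ∀ i, Z i)
    (hz0 : z 0 = x) (hzeq0 : zeq 0 = x)
    (hz : ∀ i < L, z (i + 1) = feq i (z i) + γ i • fneq i (z i))
    (hzeq : ∀ i < L, zeq (i + 1) = feq i (zeq i)) :
    ‖z L - zeq L‖ ≤
      (∑ k ∈ Finset.range L,
          |γ k| * (1 + (1 / (k : ℝ)) * ∑ j ∈ Finset.range k, |γ j|) ^ k) *
        B * M ^ (L - 1) * ‖x‖ := by
  set P : ℕ → ℝ := fun k => ∏ j ∈ Finset.range k, (1 + |γ j|) with hP
  have hPnn : ∀ k, 0 ≤ P k := fun k =>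
    Finset.prod_nonneg fun j _ => by positivity
  -- bound on ‖z n‖
  have hzb : ∀ n, n ≤ L → ‖z n‖ ≤ M ^ n * P n * ‖x‖ := by
    intro n
    induction n with
    | zero => intro _; simp [hz0, hP]
    | succ n ih =>
      intro hn1
      have hnL : n < L := hn1
      have ihn := ih (Nat.le_of_lt hnL)
      rw [hz n hnL]
      have h1 : ‖feq n (z n)‖ ≤ M * ‖z n‖ := by
        have := hfeqLip n (z n) 0
        simpa [hfeq0 n] using this
      have h2 : ‖γ n • fneq n (z n)‖ ≤ |γ n| * (M * ‖z n‖) := by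
        rw [norm_smul, Real.norm_eq_abs]
        refine mul_le_mul_of_nonneg_left ?_ (abs_nonneg _)
        exact (hfneqB n (z n)).trans
          (mul_le_mul_of_nonneg_right hBM (norm_nonneg _))
      calc ‖feq n (z n) + γ n • fneq n (z n)‖
          ≤ ‖feq n (z n)‖ + ‖γ n • fneq n (z n)‖ := norm_add_le _ _
        _ ≤ M * ‖z n‖ + |γ n| * (M * ‖z n‖) := add_le_add h1 h2
        _ = (M * (1 + |γ n|)) * ‖z n‖ := by ring
        _ ≤ (M * (1 + |γ n|)) * (M ^ n * P n * ‖x‖) := by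
            refine mul_le_mul_of_nonneg_left ihn ?_
            positivity
        _ = M ^ (n + 1) * P (n + 1) * ‖x‖ := by
            rw [hP]
            simp [Finset.prod_range_succ, pow_succ]
            ring
  -- error bound
  have herr : ∀ n, n ≤ L →
      ‖z n - zeq n‖ ≤ (∑ k ∈ Finset.range n, |γ k| * P k) * B * M ^ (n - 1) * ‖x‖ := by
    intro n
    induction n with
    | zero => intro _; simp [hz0, hzeq0]
    | succ n ih =>
      intro hn1
      have hnL : n < L := hn1
      have ihn := ih (Nat.le_of_lt hnL)
      rw [hz n hnL, hzeq n hnL]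
      have h1 : ‖feq n (z n) - feq n (zeq n)‖ ≤ M * ‖z n - zeq n‖ := hfeqLip n _ _
      have h2 : ‖γ n • fneq n (z n)‖ ≤ |γ n| * (B * ‖z n‖) := by
        rw [norm_smul, Real.norm_eq_abs]
        exact mul_le_mul_of_nonneg_left (hfneqB n (z n)) (abs_nonneg _)
      have hstep : M * ‖z n - zeq n‖ ≤
          (∑ k ∈ Finset.range n, |γ k| * P k) * B * M ^ n * ‖x‖ := by
        rcases Nat.eq_zero_or_pos n with h0 | hpos
        · subst h0; simp [hz0, hzeq0]
        · have : M * ‖z n - zeq n‖ ≤ M * ((∑ k ∈ Finset.range n, |γ k| * P k) * B * M ^ (n - 1) * ‖x‖) :=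
            mul_le_mul_of_nonneg_left ihn hM
          refine this.trans (le_of_eq ?_)
          have : M * M ^ (n - 1) = M ^ n := by
            rw [← pow_succ']
            congr 1
            omega
          rw [← this]; ring
      have h2' : |γ n| * (B * ‖z n‖) ≤ |γ n| * P n * B * M ^ n * ‖x‖ := by
        have : B * ‖z n‖ ≤ B * (M ^ n * P n * ‖x‖) :=
          mul_le_mul_of_nonneg_left (hzb n (Nat.le_of_lt hnL)) hB
        calc |γ n| * (B * ‖z n‖) ≤ |γ n| * (B * (M ^ n * P n * ‖x‖)) :=
              mul_le_mul_of_nonneg_left this (abs_nonneg _)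
          _ = |γ n| * P n * B * M ^ n * ‖x‖ := by ring
      calc ‖feq n (z n) + γ n • fneq n (z n) - feq n (zeq n)‖
          = ‖(feq n (z n) - feq n (zeq n)) + γ n • fneq n (z n)‖ := by
            congr 1; abel
        _ ≤ ‖feq n (z n) - feq n (zeq n)‖ + ‖γ n • fneq n (z n)‖ := norm_add_le _ _
        _ ≤ M * ‖z n - zeq n‖ + |γ n| * (B * ‖z n‖) := add_le_add h1 h2
        _ ≤ (∑ k ∈ Finset.range n, |γ k| * P k) * B * M ^ n * ‖x‖
              + |γ n| * P n * B * M ^ n * ‖x‖ := add_le_add hstep h2'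
        _ = (∑ k ∈ Finset.range (n + 1), |γ k| * P k) * B * M ^ n * ‖x‖ := by
            rw [Finset.sum_range_succ]; ring
        _ = (∑ k ∈ Finset.range (n + 1), |γ k| * P k) * B * M ^ (n + 1 - 1) * ‖x‖ := by
            norm_num
  refine (herr L le_rfl).trans ?_
  have hsum : (∑ k ∈ Finset.range L, |γ k| * P k) ≤
      ∑ k ∈ Finset.range L,
        |γ k| * (1 + (1 / (k : ℝ)) * ∑ j ∈ Finset.range k, |γ j|) ^ k := by
    refine Finset.sum_le_sum fun k _ => ?_
    exact mul_le_mul_of_nonneg_left (amgm_prod_le (fun j => |γ j|) (fun j => abs_nonneg _) k)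
      (abs_nonneg _)
  have hnn : 0 ≤ B * M ^ (L - 1) * ‖x‖ := by positivity
  calc (∑ k ∈ Finset.range L, |γ k| * P k) * B * M ^ (L - 1) * ‖x‖
      = (∑ k ∈ Finset.range L, |γ k| * P k) * (B * M ^ (L - 1) * ‖x‖) := by ring
    _ ≤ (∑ k ∈ Finset.range L,
          |γ k| * (1 + (1 / (k : ℝ)) * ∑ j ∈ Finset.range k, |γ j|) ^ k) *
          (B * M ^ (L - 1) * ‖x‖) := mul_le_mul_of_nonneg_right hsum hnn
    _ = _ := by ring
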